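/- With the q-deformed Cartan–Weyl Jordan–Schwinger generators E_{ij} (as built from E^J_{ij} = (x_i/x_j)[N_j] with the q-power dressing factors), for i > j > k one has [E_{ij}, E_{jk}]_{q^{−1}} := E_{ij}E_{jk} − q^{−1} E_{jk}E_{ij} = E_{ik}. -/

import Mathlib

/-- q-deformed Cartan–Weyl Jordan–Schwinger generators:
`E_{ij} = q^{−(N_{i+1}+⋯+N_{j−1})} E^J_{ij}` for `i<j`,
`E_{ij} = q^{+(N_{i−1}+⋯+N_{j+1})} E^J_{ij}` for `i>j`, with
`E^J_{ij} = (x_i/x_j)[N_j]`. The unit `qS s` represents `q^{∑_{t∈s} N_t}`. -/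
theorem stmt_5 {A : Type*} [Ring A] (n : ℕ)
    (q : Aˣ) (lamInv : A)
    (x qN : Fin (n + 1) → Aˣ)
    (qS : Finset (Fin (n + 1)) → Aˣ)
    (hq_central : ∀ a : A, (q : A) * a = a * (q : A))
    (hlam_central : ∀ a : A, lamInv * a = a * lamInv)
    (hlam : lamInv * ((q : A) - ((q⁻¹ : Aˣ) : A)) = 1)
    (hxx : ∀ i j, (x i : A) * (x j : A) = (x j : A) * (x i : A))
    (hNN : ∀ i j, (qN i : A) * (qN j : A) = (qN j : A) * (qN i : A))
    (hNx : ∀ i j, (qN i : A) * (x j : A)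
      = (if i = j then (q : A) else 1) * ((x j : A) * (qN i : A)))
    (hqS0 : qS ∅ = 1)
    (hqSi : ∀ (s : Finset (Fin (n + 1))) (t), t ∉ s → qS (insert t s) = qN t * qS s)
    (EJ E : Fin (n + 1) → Fin (n + 1) → A)
    (hEJ : ∀ i j, EJ i j
      = (x i : A) * (((x j)⁻¹ : Aˣ) : A)
          * (lamInv * ((qN j : A) - (((qN j)⁻¹ : Aˣ) : A))))
    (hElt : ∀ i j, i < j →
      E i j = (((qS (Finset.Ioo i j))⁻¹ : Aˣ) : A) * EJ i j)
    (hEgt : ∀ i j, j < i →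
      E i j = ((qS (Finset.Ioo j i) : Aˣ) : A) * EJ i j)
    (i j k : Fin (n + 1)) (hij : j < i) (hjk : k < j) :
    E i j * E j k - ((q⁻¹ : Aˣ) : A) * (E j k * E i j) = E i k := by
  -- helper: left-commutation
  have lc : ∀ {a b : A}, a * b = b * a → ∀ c : A, a * (b * c) = b * (a * c) := by
    intro a b h c; rw [← mul_assoc, h, mul_assoc]
  -- basic Commute facts
  have cQ : ∀ z : A, Commute (q : A) z := fun z => hq_central z
  have cQi : ∀ z : A, Commute ((q⁻¹ : Aˣ) : A) z := fun z => ((cQ z).symm.units_inv_right).symm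
  have cL : ∀ z : A, Commute lamInv z := fun z => hlam_central z
  have cNN : ∀ a b, Commute (qN a : A) (qN b : A) := fun a b => hNN a b
  have cXX : ∀ a b, Commute (x a : A) (x b : A) := fun a b => hxx a b
  have cNx : ∀ a b, a ≠ b → Commute (qN a : A) (x b : A) := by
    intro a b hab
    have := hNx a b
    rw [if_neg hab, one_mul] at this
    exact this
  -- qS commutation lemmas
  have cSN : ∀ s t, Commute ((qS s : Aˣ) : A) (qN t : A) := by
    intro s
    induction s using Finset.induction_on with
    | empty => intro t; simp [hqS0]
    | insert _ _ h ih =>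
      intro t
      rw [hqSi _ _ h, Units.val_mul]
      exact Commute.mul_left (hNN _ t) (ih t)
  have cSx : ∀ s t, t ∉ s → Commute ((qS s : Aˣ) : A) (x t : A) := by
    intro s
    induction s using Finset.induction_on with
    | empty => intro t _; simp [hqS0]
    | insert _ _ h ih =>
      rename_i a s'
      intro t ht
      rw [Finset.mem_insert] at ht
      push_neg at ht
      rw [hqSi _ _ h, Units.val_mul]
      exact Commute.mul_left (cNx a t (Ne.symm ht.1)) (ih t ht.2)
  have cSS : ∀ s t, Commute ((qS s : Aˣ) : A) ((qS t : Aˣ) : A) := by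
    intro s
    induction s using Finset.induction_on with
    | empty => intro t; simp [hqS0]
    | insert _ _ h ih =>
      intro t
      rw [hqSi _ _ h, Units.val_mul]
      exact Commute.mul_left (cSN t _).symm (ih t)
  -- qS of a disjoint union
  have hqSU : ∀ s t : Finset (Fin (n + 1)), Disjoint s t → qS (s ∪ t) = qS s * qS t := by
    intro s
    induction s using Finset.induction_on with
    | empty => intro t _; simp [hqS0]
    | insert _ _ h ih =>
      rename_i a s'
      intro t hd
      rw [Finset.disjoint_insert_left] at hd
      have ha : a ∉ s' ∪ t := by
        rw [Finset.mem_union]; push_neg; exact ⟨h, hd.1⟩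
      rw [Finset.insert_union, hqSi _ _ ha, ih t hd.2, hqSi _ _ h, mul_assoc]
  -- interval decomposition
  have hIoo : Finset.Ioo k i = Finset.Ioo k j ∪ insert j (Finset.Ioo j i) := by
    ext t
    simp only [Finset.mem_Ioo, Finset.mem_union, Finset.mem_insert]
    constructor
    · rintro ⟨h1, h2⟩
      rcases lt_trichotomy t j with h3 | h3 | h3
      · exact Or.inl ⟨h1, h3⟩
      · exact Or.inr (Or.inl h3)
      · exact Or.inr (Or.inr ⟨h3, h2⟩)
    · rintro (⟨h1, h2⟩ | h1 | ⟨h1, h2⟩)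
      · exact ⟨h1, h2.trans hij⟩
      · exact h1 ▸ ⟨hjk, hij⟩
      · exact ⟨hjk.trans h1, h2⟩
  have hdisj : Disjoint (Finset.Ioo k j) (insert j (Finset.Ioo j i)) := by
    rw [Finset.disjoint_left]
    intro a ha
    rw [Finset.mem_Ioo] at ha
    simp only [Finset.mem_insert, Finset.mem_Ioo]
    push_neg
    refine ⟨fun h => absurd (h ▸ ha.2) (lt_irrefl _), fun h => absurd (h.trans ha.2) (lt_irrefl _)⟩
  have hjIoo : j ∉ Finset.Ioo j i := by simp
  have hqSki : qS (Finset.Ioo k i) = qS (Finset.Ioo k j) * (qN j * qS (Finset.Ioo j i)) := by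
    rw [hIoo, hqSU _ _ hdisj, hqSi _ _ hjIoo]
  -- abbreviations
  set s1 : A := ((qS (Finset.Ioo j i) : Aˣ) : A) with hs1
  set s2 : A := ((qS (Finset.Ioo k j) : Aˣ) : A) with hs2
  set a : A := ((x i : Aˣ) : A) with hadef
  set b : A := (((x j)⁻¹ : Aˣ) : A) with hbdef
  set b' : A := ((x j : Aˣ) : A) with hb'def
  set c : A := (((x k)⁻¹ : Aˣ) : A) with hcdef
  set Nj : A := ((qN j : Aˣ) : A) with hNjdef
  set Nj' : A := (((qN j)⁻¹ : Aˣ) : A) with hNj'def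
  set Nk : A := ((qN k : Aˣ) : A) with hNkdef
  set Nk' : A := (((qN k)⁻¹ : Aˣ) : A) with hNk'def
  set Lj : A := lamInv * (Nj - Nj') with hLjdef
  set Lk : A := lamInv * (Nk - Nk') with hLkdef
  set Mj : A := lamInv * ((q : A) * Nj - ((q⁻¹ : Aˣ) : A) * Nj') with hMjdef
  -- inequalities
  have hji : j ≠ i := hij.ne
  have hkj : k ≠ j := hjk.ne
  have hki : k ≠ i := (hjk.trans hij).ne
  have hinotkj : i ∉ Finset.Ioo k j := fun h => ((Finset.mem_Ioo.mp h).2).asymm hij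
  have hjnotkj : j ∉ Finset.Ioo k j := by simp
  have hknotkj : k ∉ Finset.Ioo k j := by simp
  have hknotji : k ∉ Finset.Ioo j i := fun h => ((Finset.mem_Ioo.mp h).1).asymm hjk
  have hinotji : i ∉ Finset.Ioo j i := by simp
  -- many pairwise commutations
  have cS2Nj : Commute s2 Nj := cSN _ j
  have cS2Nj' : Commute s2 Nj' := (cSN _ j).units_inv_right
  have cS2Lj : Commute s2 Lj := ((cL s2).symm).mul_right (cS2Nj.sub_right cS2Nj')
  have cS2b : Commute s2 b := (cSx _ j hjnotkj).units_inv_right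
  have cS2a : Commute s2 a := cSx _ i hinotkj
  have cS1Nj : Commute s1 Nj := cSN _ j
  have cS1Nk : Commute s1 Nk := cSN _ k
  have cS1Nk' : Commute s1 Nk' := (cSN _ k).units_inv_right
  have cS1Lk : Commute s1 Lk := ((cL s1).symm).mul_right (cS1Nk.sub_right cS1Nk')
  have cS1c : Commute s1 c := (cSx _ k hknotji).units_inv_right
  have cS1b' : Commute s1 b' := cSx _ j hjIoo
  have cS1S2 : Commute s1 s2 := cSS _ _
  have cNka : Commute Nk a := cNx k i hki
  have cNk'a : Commute Nk' a := ((cNx k i hki).symm.units_inv_right).symm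
  have cNkb : Commute Nk b :=
    ((cNx k j hkj).units_inv_right)
  have cNk'b : Commute Nk' b :=
    (((cNx k j hkj).symm.units_inv_right).symm).units_inv_right
  have cLka : Commute Lk a := Commute.mul_left (cL a) (cNka.sub_left cNk'a)
  have cLkb : Commute Lk b := Commute.mul_left (cL b) (cNkb.sub_left cNk'b)
  have cNjNk : Commute Nj Nk := cNN j k
  have cNjNk' : Commute Nj Nk' := (cNN j k).units_inv_right
  have cNj'Nk : Commute Nj' Nk := ((cNN k j).units_inv_right).symm
  have cNj'Nk' : Commute Nj' Nk' := (((cNN k j).units_inv_right).symm).units_inv_right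
  have cLjLk : Commute Lj Lk := by
    have h1 : Commute Lj Nk := Commute.mul_left (cL Nk)
      ((cNjNk.sub_left cNj'Nk))
    have h2 : Commute Lj Nk' := Commute.mul_left (cL Nk')
      ((cNjNk'.sub_left cNj'Nk'))
    exact Commute.mul_right (cL Lj).symm ((h1.sub_right h2))
  have cLkLj : Commute Lk Lj := cLjLk.symm
  have cNja : Commute Nj a := cNx j i hji
  have cNjc : Commute Nj c := (cNx j k (fun h => hkj h.symm)).units_inv_right
  have cNj'c : Commute Nj' c :=
    (((cNx j k (fun h => hkj h.symm)).symm.units_inv_right).symm).units_inv_right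
  have cMjc : Commute Mj c := by
    refine Commute.mul_left (cL c) ?_
    exact (Commute.mul_left (cQ c) cNjc).sub_left (Commute.mul_left (cQi c) cNj'c)
  have cb'a : Commute b' a := cXX j i
  have cb'c : Commute b' c := (cXX j k).units_inv_right
  have cca : Commute c a := ((cXX i k).units_inv_right).symm
  have hbb' : b * b' = 1 := by rw [hbdef, hb'def]; exact Units.inv_mul _
  have hb'b : b' * b = 1 := by rw [hbdef, hb'def]; exact Units.mul_inv _
  -- the key exchange relation L_j * x_j = x_j * M_j
  have hNjb' : Nj * b' = (q : A) * (b' * Nj) := by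
    have := hNx j j; rw [if_pos rfl] at this; exact this
  have hNj'b' : Nj' * b' = ((q⁻¹ : Aˣ) : A) * (b' * Nj') := by
    have h3 : Nj' * Nj = 1 := by rw [hNjdef, hNj'def]; exact Units.inv_mul _
    have h4 : Nj * Nj' = 1 := by rw [hNjdef, hNj'def]; exact Units.mul_inv _
    have step1 : Nj' * (Nj * b') * Nj' = b' * Nj' := by
      rw [← mul_assoc Nj' Nj b', h3, one_mul]
    have step2 : Nj' * ((q : A) * (b' * Nj)) * Nj' = (q : A) * (Nj' * b') := by
      rw [lc (cQ Nj').symm.eq, mul_assoc (q : A), mul_assoc Nj' (b' * Nj) Nj',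
        mul_assoc b' Nj Nj', h4, mul_one]
    have h1 : b' * Nj' = (q : A) * (Nj' * b') := by
      rw [← step1, hNjb']; exact step2
    calc Nj' * b' = ((q⁻¹ : Aˣ) : A) * ((q : A) * (Nj' * b')) := by
          rw [← mul_assoc, Units.inv_mul, one_mul]
      _ = ((q⁻¹ : Aˣ) : A) * (b' * Nj') := by rw [← h1]
  have hLjb' : Lj * b' = b' * Mj := by
    rw [hLjdef, hMjdef, mul_assoc, sub_mul, hNjb', hNj'b', lc (cQ b').eq, lc (cQi b').eq,
      ← mul_sub, lc (cL b').eq]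
  -- expansions of the generators
  have hEij : E i j = s1 * (a * b * Lj) := by
    rw [hEgt i j hij, hEJ i j, mul_assoc]
  have hEjk : E j k = s2 * (b' * c * Lk) := by
    rw [hEgt j k hjk, hEJ j k, mul_assoc]
  have hEik : E i k = s2 * (Nj * (s1 * (a * (c * Lk)))) := by
    rw [hEgt i k (hjk.trans hij), hEJ i k, hqSki]
    simp only [Units.val_mul]
    rw [mul_assoc, mul_assoc, mul_assoc]
  -- Claim A
  have claimA : E i j * E j k = s1 * (s2 * (a * (c * (Mj * Lk)))) := by
    rw [hEij, hEjk]
    simp only [mul_assoc]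
    rw [lc cS2Lj.symm.eq, lc cS2b.symm.eq, lc cS2a.symm.eq]
    rw [← mul_assoc Lj b', hLjb', mul_assoc b']
    rw [← mul_assoc b b', hbb', one_mul]
    rw [lc cMjc.eq]
  -- Claim B
  have claimB : E j k * E i j = s1 * (s2 * (a * (c * (Lj * Lk)))) := by
    rw [hEjk, hEij]
    simp only [mul_assoc]
    rw [lc cS1Lk.symm.eq, lc cLka.eq, lc cLkb.eq, cLkLj.eq]
    rw [lc cS1c.symm.eq, lc cS1b'.symm.eq, lc cS1S2.symm.eq]
    rw [lc cb'c.eq, lc cb'a.eq, ← mul_assoc b' b, hb'b, one_mul, lc cca.eq]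
  -- Claim C
  have claimC : E i k = s1 * (s2 * (a * (c * (Nj * Lk)))) := by
    rw [hEik]
    rw [lc cS1Nj.symm.eq, lc cS1S2.symm.eq, lc cNja.eq, lc cNjc.eq]
  -- Claim D
  have claimD : Mj - ((q⁻¹ : Aˣ) : A) * Lj = Nj := by
    have h1 : ((q⁻¹ : Aˣ) : A) * Lj = lamInv * (((q⁻¹ : Aˣ) : A) * Nj - ((q⁻¹ : Aˣ) : A) * Nj') := by
      rw [hLjdef, ← mul_assoc, (cQi lamInv).eq, mul_assoc, mul_sub]
    rw [hMjdef, h1, ← mul_sub]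
    have h2 : (q : A) * Nj - ((q⁻¹ : Aˣ) : A) * Nj' -
        (((q⁻¹ : Aˣ) : A) * Nj - ((q⁻¹ : Aˣ) : A) * Nj') = ((q : A) - ((q⁻¹ : Aˣ) : A)) * Nj := by
      rw [sub_mul]; abel
    rw [h2, ← mul_assoc, hlam, one_mul]
  -- finish
  rw [claimA, claimB, claimC]
  rw [lc (cQi s1).eq, lc (cQi s2).eq, lc (cQi a).eq, lc (cQi c).eq]
  rw [← claimD]
  simp only [mul_sub, sub_mul, mul_assoc]
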